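/- Consider the linearized ADMM setting with variables x^{k+1} ∈ ℝ^p, y^k, y^{k+1} ∈ ℝ^q, γ^k ∈ ℝ^n, matrices A ∈ ℝ^{n×p}, B ∈ ℝ^{n×q}, functions g : ℝ^p × ℝ^q → ℝ (L_g-Lipschitz differentiable), f : ℝ^p → ℝ, h : ℝ^q → ℝ (L_h-Lipschitz differentiable), and constants L_y > 0, β > 0. If y^{k+1} is a global minimizer of h̄^k, then L_β(x^{k+1}, y^k, γ^k) − L_β(x^{k+1}, y^{k+1}, γ^k) ≥ C1 ‖y^k − y^{k+1}‖², where C1 = (2L_y − L_w)/2 and L_w = L_g + L_h. -/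

import Mathlib

open Matrix Filter
open scoped RealInnerProductSpace

noncomputable section

abbrev Vec (m : ℕ) := EuclideanSpace ℝ (Fin m)

def mv {m l : ℕ} (M : Matrix (Fin m) (Fin l) ℝ) (v : Vec l) : Vec m := WithLp.toLp 2 (M.mulVec v)

def gradx {p q : ℕ} (g : Vec p → Vec q → ℝ) (x : Vec p) (y : Vec q) : Vec p :=
  gradient (fun x' => g x' y) x

def grady {p q : ℕ} (g : Vec p → Vec q → ℝ) (x : Vec p) (y : Vec q) : Vec q :=
  gradient (g x) y

def LipschitzDifferentiable {m : ℕ} (h : Vec m → ℝ) (L : ℝ) : Prop :=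
  Differentiable ℝ h ∧ ∀ y y' : Vec m, ‖gradient h y - gradient h y'‖ ≤ L * ‖y - y'‖

def LipschitzDifferentiable2 {p q : ℕ} (g : Vec p → Vec q → ℝ) (L : ℝ) : Prop :=
  (∀ y, Differentiable ℝ fun x => g x y) ∧ (∀ x, Differentiable ℝ (g x)) ∧
    ∀ x x' : Vec p, ∀ y y' : Vec q,
      Real.sqrt (‖gradx g x y - gradx g x' y'‖ ^ 2 + ‖grady g x y - grady g x' y'‖ ^ 2) ≤
        L * Real.sqrt (‖x - x'‖ ^ 2 + ‖y - y'‖ ^ 2)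

def Lagr {p q n : ℕ} (β : ℝ) (g : Vec p → Vec q → ℝ) (f : Vec p → ℝ) (h : Vec q → ℝ)
    (A : Matrix (Fin n) (Fin p) ℝ) (B : Matrix (Fin n) (Fin q) ℝ)
    (x : Vec p) (y : Vec q) (γ : Vec n) : ℝ :=
  g x y + f x + h y + ⟪γ, mv A x + mv B y⟫ + β / 2 * ‖mv A x + mv B y‖ ^ 2

def fbar {p q n : ℕ} (f : Vec p → ℝ) (g : Vec p → Vec q → ℝ)
    (A : Matrix (Fin n) (Fin p) ℝ) (B : Matrix (Fin n) (Fin q) ℝ) (β Lx : ℝ)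
    (xk : Vec p) (yk : Vec q) (γk : Vec n) (x : Vec p) : ℝ :=
  f x + ⟪γk, mv A x⟫ + Lx / 2 * ‖x - xk‖ ^ 2 +
    ⟪x - xk, gradx g xk yk + β • mv Aᵀ (mv A xk + mv B yk)⟫

def hbar {p q n : ℕ} (g : Vec p → Vec q → ℝ) (h : Vec q → ℝ)
    (A : Matrix (Fin n) (Fin p) ℝ) (B : Matrix (Fin n) (Fin q) ℝ) (β Ly : ℝ)
    (xk1 : Vec p) (yk : Vec q) (γk : Vec n) (y : Vec q) : ℝ :=
  ⟪γk, mv B y⟫ + Ly / 2 * ‖y - yk‖ ^ 2 + β / 2 * ‖mv A xk1 + mv B y‖ ^ 2 +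
    ⟪y - yk, grady g xk1 yk + gradient h yk⟫

def IsSmallestEigenvalue {m : ℕ} (M : Matrix (Fin m) (Fin m) ℝ) (lam : ℝ) : Prop :=
  (∃ v : Fin m → ℝ, v ≠ 0 ∧ M.mulVec v = lam • v) ∧
    ∀ μ : ℝ, (∃ v : Fin m → ℝ, v ≠ 0 ∧ M.mulVec v = μ • v) → lam ≤ μ

def IsLargestEigenvalue {m : ℕ} (M : Matrix (Fin m) (Fin m) ℝ) (lam : ℝ) : Prop :=
  (∃ v : Fin m → ℝ, v ≠ 0 ∧ M.mulVec v = lam • v) ∧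
    ∀ μ : ℝ, (∃ v : Fin m → ℝ, v ≠ 0 ∧ M.mulVec v = μ • v) → μ ≤ lam

def RegularSubgradientAt {m : ℕ} (f : Vec m → ℝ) (x₀ v : Vec m) : Prop :=
  ∀ ε > 0, ∀ᶠ x in nhds x₀, f x₀ + ⟪v, x - x₀⟫ - ε * ‖x - x₀‖ ≤ f x

-- auxiliary lemmas
lemma mv_add {m l : ℕ} (M : Matrix (Fin m) (Fin l) ℝ) (v w : Vec l) :
    mv M (v + w) = mv M v + mv M w := by
  show WithLp.toLp 2 (M.mulVec (v + w)) = _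
  rw [Matrix.mulVec_add]; rfl

lemma mv_smul {m l : ℕ} (M : Matrix (Fin m) (Fin l) ℝ) (t : ℝ) (v : Vec l) :
    mv M (t • v) = t • mv M v := by
  show WithLp.toLp 2 (M.mulVec (t • v)) = _
  rw [Matrix.mulVec_smul]; rfl

-- gradient of a sum
lemma grad_add {m : ℕ} (f g : Vec m → ℝ) (y : Vec m)
    (hf : DifferentiableAt ℝ f y) (hg : DifferentiableAt ℝ g y) :
    gradient (fun z => f z + g z) y = gradient f y + gradient g y := by
  have h1 := hasGradientAt_iff_hasFDerivAt.mp hf.hasGradientAt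
  have h2 := hasGradientAt_iff_hasFDerivAt.mp hg.hasGradientAt
  have h3 := h1.add h2
  rw [← map_add] at h3
  exact (hasGradientAt_iff_hasFDerivAt.mpr h3).gradient

-- descent lemma
lemma descent {m : ℕ} (w : Vec m → ℝ) (L : ℝ) (hw : Differentiable ℝ w)
    (hlip : ∀ y y' : Vec m, ‖gradient w y - gradient w y'‖ ≤ L * ‖y - y'‖)
    (a b : Vec m) : w b ≤ w a + ⟪gradient w a, b - a⟫ + L / 2 * ‖b - a‖ ^ 2 := by
  set u := b - a with hu
  have hline : ∀ t : ℝ, HasDerivAt (fun t : ℝ => a + t • u) u t := fun t => by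
    simpa using ((hasDerivAt_id t).smul_const u).const_add a
  have hφ : ∀ t : ℝ, HasDerivAt (fun t => w (a + t • u)) ⟪gradient w (a + t • u), u⟫ t := by
    intro t
    have h1 : HasFDerivAt w (InnerProductSpace.toDual ℝ _ (gradient w (a + t • u))) (a + t • u) :=
      hasGradientAt_iff_hasFDerivAt.mp (hw _).hasGradientAt
    have h2 := h1.comp_hasDerivAt t (hline t)
    rw [InnerProductSpace.toDual_apply_apply] at h2
    exact h2
  set ψ : ℝ → ℝ := fun t => L / 2 * ‖u‖ ^ 2 * t ^ 2 + t * ⟪gradient w a, u⟫ - w (a + t • u)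
    with hψ
  have hψd : ∀ t : ℝ,
      HasDerivAt ψ (L * ‖u‖ ^ 2 * t + ⟪gradient w a, u⟫ - ⟪gradient w (a + t • u), u⟫) t := by
    intro t
    have h1 := (((hasDerivAt_pow 2 t).const_mul (L / 2 * ‖u‖ ^ 2)).add
      (hasDerivAt_mul_const (⟪gradient w a, u⟫ : ℝ))).sub (hφ t)
    refine h1.congr_deriv ?_
    push_cast
    ring
  have hcont : ContinuousOn ψ (Set.Icc (0:ℝ) 1) :=
    (continuous_iff_continuousAt.mpr fun t => (hψd t).differentiableAt.continuousAt).continuousOn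
  have hdiff : DifferentiableOn ℝ ψ (interior (Set.Icc (0:ℝ) 1)) :=
    fun t _ => (hψd t).differentiableAt.differentiableWithinAt
  have hmono : MonotoneOn ψ (Set.Icc (0:ℝ) 1) := by
    apply monotoneOn_of_deriv_nonneg (convex_Icc 0 1) hcont hdiff
    intro t ht
    rw [interior_Icc] at ht
    rw [(hψd t).deriv]
    have hb : ⟪gradient w (a + t • u), u⟫ - ⟪gradient w a, u⟫ ≤ L * ‖u‖ ^ 2 * t := by
      rw [← inner_sub_left]
      calc ⟪gradient w (a + t • u) - gradient w a, u⟫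
          ≤ ‖gradient w (a + t • u) - gradient w a‖ * ‖u‖ := real_inner_le_norm _ _
        _ ≤ (L * ‖a + t • u - a‖) * ‖u‖ :=
            mul_le_mul_of_nonneg_right (by simpa using hlip (a + t • u) a) (norm_nonneg _)
        _ = L * ‖u‖ ^ 2 * t := by
            have : a + t • u - a = t • u := by abel
            rw [this, norm_smul, Real.norm_eq_abs, abs_of_pos ht.1]; ring
    linarith
  have h01 := hmono (Set.mem_Icc.mpr ⟨le_refl 0, zero_le_one⟩)
    (Set.mem_Icc.mpr ⟨zero_le_one, le_refl 1⟩) zero_le_one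
  have he0 : ψ 0 = -(w a) := by simp [hψ]
  have he1 : ψ 1 = L / 2 * ‖u‖ ^ 2 + ⟪gradient w a, u⟫ - w b := by
    simp [hψ, hu]
  rw [he0, he1] at h01
  linarith


set_option maxHeartbeats 1000000 in
theorem statement5 {p q n : ℕ}
    (A : Matrix (Fin n) (Fin p) ℝ) (B : Matrix (Fin n) (Fin q) ℝ)
    (g : Vec p → Vec q → ℝ) (f : Vec p → ℝ) (h : Vec q → ℝ)
    (Lg Lh : ℝ) (hg : LipschitzDifferentiable2 g Lg) (hh : LipschitzDifferentiable h Lh)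
    (Ly β : ℝ) (hLy : 0 < Ly) (hβ : 0 < β)
    (xk1 : Vec p) (yk yk1 : Vec q) (γk : Vec n)
    (hmin : ∀ y : Vec q,
      hbar g h A B β Ly xk1 yk γk yk1 ≤ hbar g h A B β Ly xk1 yk γk y) :
    Lagr β g f h A B xk1 yk γk - Lagr β g f h A B xk1 yk1 γk ≥
      (2 * Ly - (Lg + Lh)) / 2 * ‖yk - yk1‖ ^ 2 := by
  classical
  set u : Vec q := yk - yk1 with hu
  by_cases hu0 : u = 0
  · have hyy : yk = yk1 := by
      have := sub_eq_zero.mp (hu ▸ hu0)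
      exact this
    rw [hyy]
    simp [hu, hyy, hu0]
  -- notation
  set Bu : Vec n := mv B u with hBu
  set c : Vec n := mv A xk1 + mv B yk1 with hc
  set s : Vec q := grady g xk1 yk + gradient h yk with hs
  have hyk : yk = yk1 + u := by rw [hu]; abel
  -- quadratic expansion of hbar along the segment
  set aa : ℝ := Ly / 2 * ‖u‖ ^ 2 + β / 2 * ‖Bu‖ ^ 2 with haa
  set bb : ℝ := ⟪γk, Bu⟫ - Ly * ‖u‖ ^ 2 + β * ⟪c, Bu⟫ + ⟪u, s⟫ with hbb
  set C : ℝ := ⟪γk, mv B yk1⟫ + Ly / 2 * ‖u‖ ^ 2 + β / 2 * ‖c‖ ^ 2 - ⟪u, s⟫ with hC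
  have expand : ∀ t : ℝ, hbar g h A B β Ly xk1 yk γk (yk1 + t • u)
      = C + bb * t + aa * t ^ 2 := by
    intro t
    have hy1 : yk1 + t • u - yk = (t - 1) • u := by
      rw [hyk, sub_smul, one_smul]; abel
    have hy2 : mv A xk1 + mv B (yk1 + t • u) = c + t • Bu := by
      rw [mv_add, mv_smul, hc, hBu]; abel
    have hn1 : ‖(t - 1) • u‖ ^ 2 = (t - 1) ^ 2 * ‖u‖ ^ 2 := by
      rw [norm_smul, mul_pow, Real.norm_eq_abs, sq_abs]
    have hn2 : ‖c + t • Bu‖ ^ 2 = ‖c‖ ^ 2 + 2 * (t * ⟪c, Bu⟫) + t ^ 2 * ‖Bu‖ ^ 2 := by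
      rw [@norm_add_sq_real, real_inner_smul_right, norm_smul, mul_pow,
        Real.norm_eq_abs, sq_abs]
    rw [hbar, hy1, hy2, hn1, hn2, mv_add, mv_smul, inner_add_right,
      real_inner_smul_right, real_inner_smul_left, ← hBu, ← hs]
    rw [hC, hbb, haa]
    ring
  have hEt : ∀ t : ℝ, 0 ≤ bb * t + aa * t ^ 2 := by
    intro t
    have h0 := hmin (yk1 + t • u)
    have h0' : hbar g h A B β Ly xk1 yk γk yk1 = C := by
      have := expand 0
      simpa using this
    rw [expand t, h0'] at h0
    linarith
  have haa_pos : 0 < aa := by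
    have h1 : 0 < ‖u‖ ^ 2 := pow_pos (norm_pos_iff.mpr hu0) 2
    have h2 : 0 ≤ ‖Bu‖ ^ 2 := sq_nonneg _
    rw [haa]; nlinarith
  have hbb0 : bb = 0 := by
    have h1 := hEt (-(bb / (2 * aa)))
    have key : bb * (-(bb / (2 * aa))) + aa * (-(bb / (2 * aa))) ^ 2 = -(bb ^ 2) / (4 * aa) := by
      field_simp
      ring
    rw [key] at h1
    rw [le_div_iff₀ (by linarith : (0:ℝ) < 4 * aa)] at h1
    have h2 : bb ^ 2 ≤ 0 := by linarith
    have h3 : bb ^ 2 = 0 := le_antisymm h2 (sq_nonneg bb)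
    exact pow_eq_zero_iff (two_ne_zero) |>.mp h3
  -- the combined function w and th  descent lemma
  set w : Vec q → ℝ := fun y => g xk1 y + h y with hw
  have hwdiff : Differentiable ℝ w := (hg.2.1 xk1).add hh.1
  have hwgrad : ∀ y : Vec q, gradient w y = grady g xk1 y + gradient h y := by
    intro y
    exact grad_add (g xk1) h y ((hg.2.1 xk1).differentiableAt) (hh.1.differentiableAt)
  have hglip : ∀ y y' : Vec q, ‖grady g xk1 y - grady g xk1 y'‖ ≤ Lg * ‖y - y'‖ := by
    intro y y'
    have h1 := hg.2.2 xk1 xk1 y y'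
    simp only [sub_self, norm_zero, ne_eq, OfNat.ofNat_ne_zero, not_false_eq_true,
      zero_pow, zero_add] at h1
    rw [Real.sqrt_sq (norm_nonneg _)] at h1
    calc ‖grady g xk1 y - grady g xk1 y'‖
        = Real.sqrt (‖grady g xk1 y - grady g xk1 y'‖ ^ 2) :=
          (Real.sqrt_sq (norm_nonneg _)).symm
      _ ≤ Real.sqrt (‖gradx g xk1 y - gradx g xk1 y'‖ ^ 2 +
            ‖grady g xk1 y - grady g xk1 y'‖ ^ 2) := by
          apply Real.sqrt_le_sqrt
          nlinarith [sq_nonneg ‖gradx g xk1 y - gradx g xk1 y'‖]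
      _ ≤ Lg * ‖y - y'‖ := h1
  have hwlip : ∀ y y' : Vec q, ‖gradient w y - gradient w y'‖ ≤ (Lg + Lh) * ‖y - y'‖ := by
    intro y y'
    rw [hwgrad, hwgrad]
    calc ‖grady g xk1 y + gradient h y - (grady g xk1 y' + gradient h y')‖
        = ‖(grady g xk1 y - grady g xk1 y') + (gradient h y - gradient h y')‖ := by
          congr 1; abel
      _ ≤ ‖grady g xk1 y - grady g xk1 y'‖ + ‖gradient h y - gradient h y'‖ := norm_add_le _ _
      _ ≤ Lg * ‖y - y'‖ + Lh * ‖y - y'‖ := add_le_add (hglip y y') (hh.2 y y')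
      _ = (Lg + Lh) * ‖y - y'‖ := by ring
  -- descent lemma at yk, evaluated at yk1
  have hdesc := descent w (Lg + Lh) hwdiff hwlip yk yk1
  have hgyk : gradient w yk = s := by rw [hwgrad, hs]
  have hy1k : yk1 - yk = -u := by rw [hu]; abel
  rw [hgyk, hy1k, norm_neg, inner_neg_right] at hdesc
  -- expand the Lagrangian difference
  have hL : Lagr β g f h A B xk1 yk γk - Lagr β g f h A B xk1 yk1 γk
      = (w yk - w yk1) + ⟪γk, Bu⟫ + β * ⟪c, Bu⟫ + β / 2 * ‖Bu‖ ^ 2 := by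
    have hA2 : mv A xk1 + mv B yk = c + Bu := by
      rw [hyk, mv_add, hc, hBu]; abel
    have hn2 : ‖c + Bu‖ ^ 2 = ‖c‖ ^ 2 + 2 * ⟪c, Bu⟫ + ‖Bu‖ ^ 2 := norm_add_sq_real c Bu
    rw [Lagr, Lagr, hA2, hn2, inner_add_right, hw]
    ring
  have hsu : (⟪u, s⟫ : ℝ) = ⟪s, u⟫ := real_inner_comm s u
  have hnorm : ‖yk - yk1‖ = ‖u‖ := by rw [hu]
  rw [hL, hnorm]
  have hbuse : ⟪γk, Bu⟫ + β * ⟪c, Bu⟫ = Ly * ‖u‖ ^ 2 - ⟪u, s⟫ := by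
    have := hbb0
    rw [hbb] at this
    linarith
  have hβn : 0 ≤ β / 2 * ‖Bu‖ ^ 2 := by positivity
  linarith [hdesc, hbuse, hβn, hsu]
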